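/- Let u : ℝ → ℤ → ℝ be such that for each n the map t ↦ u t n is differentiable and satisfies the modified Ito–Narita–Bogoyavlensky equation u̇ₙ = uₙ(uₙ₊₂uₙ₊₁ − uₙ₋₁uₙ₋₂). Define v t n = u t (n+1) · u t n. Then v satisfies the Ito–Narita–Bogoyavlensky equation v̇ₙ = vₙ(vₙ₊₂ + vₙ₊₁ − vₙ₋₁ − vₙ₋₂). -/

import Mathlib

/-- Transformation T2 (v̂ₙ = uₙ₊₁uₙ) maps the modified INB equation (E9)
to the Ito–Narita–Bogoyavlensky equation (1.3). -/
theorem stmt_0 (u v : ℝ → ℤ → ℝ)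
    (hu : ∀ t n, HasDerivAt (fun s => u s n)
      (u t n * (u t (n + 2) * u t (n + 1) - u t (n - 1) * u t (n - 2))) t)
    (hv : ∀ t n, v t n = u t (n + 1) * u t n) :
    ∀ t n, HasDerivAt (fun s => v s n)
      (v t n * (v t (n + 2) + v t (n + 1) - v t (n - 1) - v t (n - 2))) t := by
  intro t n
  have h := ((hu t (n + 1)).mul (hu t n)).congr_of_eventuallyEq
    (Filter.Eventually.of_forall fun s => hv s n)
  refine h.congr_deriv ?_
  have e1 : n + 1 + 2 = n + 3 := by ring
  have e2 : n + 1 + 1 = n + 2 := by ring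
  have e3 : n + 1 - 1 = n := by ring
  have e4 : n + 1 - 2 = n - 1 := by ring
  have e5 : n + 2 + 1 = n + 3 := by ring
  have e6 : n - 1 + 1 = n := by ring
  have e7 : n - 2 + 1 = n - 1 := by ring
  simp only [hv, e1, e2, e3, e4, e5, e6, e7]
  ring
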